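/- Let S ⊆ ℤ^r be finite and nonempty, a_s ∈ K[n]\{0} for s ∈ S, and f ∈ K[n]. Let s, t ∈ S be two corner points of S and let a'_s and a'_t denote the aperiodic parts of a_s and a_t, respectively. If Spread(a'_s, a'_t) = ∅ (i.e., Disp(a'_s, a'_t) = −∞), then the aperiodic part of the denominator (in lowest terms) of any rational solution y ∈ K(n) of the PLDE ∑_{s∈S} a_s N^s y = f is 1 (a unit). -/

import Mathlib

open MvPolynomial

/-- The substitution homomorphism `n_j ↦ n_j + i_j` on `K[n₁,…,n_r]`. -/
noncomputable def mShiftHom (K : Type*) [Field K] {r : ℕ} (i : Fin r → ℤ) :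
    MvPolynomial (Fin r) K →ₐ[K] MvPolynomial (Fin r) K :=
  aeval (fun j => X j + C (i j : K))

/-- The shift automorphism `N^i` of `K[n₁,…,n_r]`, determined by `n_j ↦ n_j + i_j`. -/
noncomputable def mShift (K : Type*) [Field K] {r : ℕ} (i : Fin r → ℤ) :
    MvPolynomial (Fin r) K ≃ₐ[K] MvPolynomial (Fin r) K :=
  AlgEquiv.ofAlgHom (mShiftHom K i) (mShiftHom K (-i))
    (by apply MvPolynomial.algHom_ext; intro j; simp [mShiftHom])
    (by apply MvPolynomial.algHom_ext; intro j; simp [mShiftHom])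

/-- `Spread(p,q) = { i ∈ ℤ^r : gcd(p, N^i q) ≠ 1 }`, where `gcd ≠ 1` (not a unit)
is expressed as `¬ IsRelPrime`. -/
def mSpread {K : Type*} [Field K] {r : ℕ} (p q : MvPolynomial (Fin r) K) :
    Set (Fin r → ℤ) :=
  {i | ¬ IsRelPrime p (mShift K i q)}

/-- The canonical embedding of `K[n₁,…,n_r]` into its fraction field `K(n₁,…,n_r)`. -/
noncomputable def toFrac (K : Type*) [Field K] {r : ℕ} :
    MvPolynomial (Fin r) K →+* FractionRing (MvPolynomial (Fin r) K) :=
  algebraMap _ _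

/-- The shift automorphism `N^i` extended to the fraction field `K(n₁,…,n_r)`. -/
noncomputable def fShift (K : Type*) [Field K] {r : ℕ} (i : Fin r → ℤ) :
    FractionRing (MvPolynomial (Fin r) K) ≃+* FractionRing (MvPolynomial (Fin r) K) :=
  IsFractionRing.ringEquivOfRingEquiv (mShift K i).toRingEquiv

section Aux

variable {K : Type*} [Field K] {r : ℕ}

lemma mShift_apply (i : Fin r → ℤ) (p : MvPolynomial (Fin r) K) :
    mShift K i p = aeval (fun j => X j + C (i j : K)) p := rfl

lemma mShift_mShift (i j : Fin r → ℤ) (p : MvPolynomial (Fin r) K) :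
    mShift K i (mShift K j p) = mShift K (i + j) p := by
  have h : (mShift K i).toAlgHom.comp (mShift K j).toAlgHom = (mShift K (i + j)).toAlgHom := by
    apply MvPolynomial.algHom_ext
    intro l
    simp only [AlgHom.coe_comp, Function.comp_apply, AlgEquiv.toAlgHom_eq_coe,
      AlgHom.coe_coe, mShift_apply, aeval_X, map_add, aeval_C]
    simp only [AlgEquiv.toAlgHom_apply, AlgEquiv.coe_toAlgHom, mShift_apply, aeval_X, map_add, aeval_C]
    simp only [algebraMap_eq, Pi.add_apply]
    push_cast
    rw [C_add, add_assoc]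
  exact DFunLike.congr_fun h p

lemma mShift_zero (p : MvPolynomial (Fin r) K) : mShift K (0 : Fin r → ℤ) p = p := by
  have h : (mShift K (0 : Fin r → ℤ)).toAlgHom = AlgHom.id K _ := by
    apply MvPolynomial.algHom_ext
    intro l
    simp [mShift_apply]
  exact DFunLike.congr_fun h p

lemma mShift_dvd_iff {i : Fin r → ℤ} {p q : MvPolynomial (Fin r) K} :
    mShift K i p ∣ mShift K i q ↔ p ∣ q := by
  constructor
  · intro h
    have h2 := map_dvd (mShift K (-i)) h
    simpa [mShift_mShift, mShift_zero] using h2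
  · exact fun h => map_dvd _ h

lemma mShift_isUnit_iff {i : Fin r → ℤ} {p : MvPolynomial (Fin r) K} :
    IsUnit (mShift K i p) ↔ IsUnit p := by
  constructor
  · intro h
    have h2 := h.map (mShift K (-i))
    simpa [mShift_mShift, mShift_zero] using h2
  · exact fun h => h.map _

lemma mShift_irreducible_iff {i : Fin r → ℤ} {p : MvPolynomial (Fin r) K} :
    Irreducible (mShift K i p) ↔ Irreducible p :=
  MulEquiv.irreducible_iff (mShift K i)

lemma mShift_isRelPrime_iff {i : Fin r → ℤ} {p q : MvPolynomial (Fin r) K} :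
    IsRelPrime (mShift K i p) (mShift K i q) ↔ IsRelPrime p q := by
  constructor
  · intro h c hcp hcq
    exact mShift_isUnit_iff.mp (h (map_dvd (mShift K i) hcp) (map_dvd (mShift K i) hcq))
  · intro h c hcp hcq
    have h1 : mShift K (-i) c ∣ p := by
      have := map_dvd (mShift K (-i)) hcp
      simpa [mShift_mShift, mShift_zero] using this
    have h2 : mShift K (-i) c ∣ q := by
      have := map_dvd (mShift K (-i)) hcq
      simpa [mShift_mShift, mShift_zero] using this
    exact mShift_isUnit_iff.mp (h h1 h2)

lemma mSpread_shift (j : Fin r → ℤ) (d : MvPolynomial (Fin r) K) :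
    mSpread (mShift K j d) (mShift K j d) = mSpread d d := by
  ext i
  simp only [mSpread, Set.mem_setOf_eq, not_iff_not]
  rw [mShift_mShift, show i + j = j + i from add_comm _ _, ← mShift_mShift,
    mShift_isRelPrime_iff]

lemma finite_shift_dvd {d : MvPolynomial (Fin r) K} (hd : Irreducible d)
    (hfin : (mSpread d d).Finite) (q : MvPolynomial (Fin r) K) (hq : q ≠ 0) :
    {i : Fin r → ℤ | mShift K i d ∣ q}.Finite := by
  induction q using UniqueFactorizationMonoid.induction_on_prime with
  | h₁ => exact absurd rfl hq
  | h₂ x hx =>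
    convert Set.finite_empty
    ext i
    simp only [Set.mem_setOf_eq, Set.mem_empty_iff_false, iff_false]
    intro hdvd
    exact (mShift_irreducible_iff.mpr hd).not_isUnit (isUnit_of_dvd_unit hdvd hx)
  | h₃ a p ha hp ih =>
    have hsub : {i : Fin r → ℤ | mShift K i d ∣ p * a} ⊆
        {i | mShift K i d ∣ p} ∪ {i | mShift K i d ∣ a} := by
      intro i hi
      have hprime : Prime (mShift K i d) :=
        UniqueFactorizationMonoid.irreducible_iff_prime.mp (mShift_irreducible_iff.mpr hd)
      rcases hprime.dvd_mul.mp hi with h | h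
      · exact Or.inl h
      · exact Or.inr h
    refine Set.Finite.subset (Set.Finite.union ?_ (ih ha)) hsub
    by_cases hne : {i : Fin r → ℤ | mShift K i d ∣ p}.Nonempty
    · obtain ⟨i₀, hi₀⟩ := hne
      have hsub2 : {i : Fin r → ℤ | mShift K i d ∣ p} ⊆ (· + i₀) '' (mSpread d d) := by
        intro i hi
        refine ⟨i - i₀, ?_, by simp⟩
        -- N^i d ∣ p, N^{i₀} d ∣ p, both irreducible factors of prime p ⇒ associated
        have hassoc : Associated (mShift K i₀ d) (mShift K i d) := by
          have h1 := ((mShift_irreducible_iff (i := i₀)).mpr hd).associated_of_dvd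
            hp.irreducible hi₀
          have h2 := ((mShift_irreducible_iff (i := i)).mpr hd).associated_of_dvd
            hp.irreducible hi
          exact h1.trans h2.symm
        have hdvd : mShift K i₀ d ∣ mShift K i d := hassoc.dvd
        rw [show i = i₀ + (i - i₀) by simp, ← mShift_mShift, mShift_dvd_iff] at hdvd
        intro hrel
        exact (hd.not_isUnit) (hrel dvd_rfl hdvd)
      exact Set.Finite.subset (hfin.image _) hsub2
    · rw [Set.not_nonempty_iff_eq_empty] at hne
      rw [hne]
      exact Set.finite_empty
end Aux

section Corner

variable {K : Type*} [Field K] {r : ℕ}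

lemma corner_extract
    (S : Finset (Fin r → ℤ)) (a : (Fin r → ℤ) → MvPolynomial (Fin r) K)
    (f pnum u q : MvPolynomial (Fin r) K)
    (s : Fin r → ℤ) (hs : s ∈ S)
    (hscorner : ∃ v : Fin r → ℝ, v ≠ 0 ∧
      ∀ w ∈ S, w ≠ s → 0 < ∑ l, v l * ((w l - s l : ℤ) : ℝ))
    (us' as' : MvPolynomial (Fin r) K) (hsfact : a s = us' * as')
    (hus' : ∀ d, Irreducible d → d ∣ us' → (mSpread d d).Infinite)
    (d : MvPolynomial (Fin r) K) (hdirr : Irreducible d) (hdfin : (mSpread d d).Finite)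
    (hddvd : d ∣ q) (hq0 : q ≠ 0)
    (hcop : IsRelPrime pnum (u * q))
    (hu : ∀ e, Irreducible e → e ∣ u → (mSpread e e).Infinite)
    (poly_id : ∑ w ∈ S, a w * mShift K w pnum * ∏ w' ∈ S.erase w, mShift K w' (u * q)
      = f * ∏ w ∈ S, mShift K w (u * q)) :
    ∃ i : Fin r → ℤ, mShift K i d ∣ q ∧ mShift K (s + i) d ∣ as' := by
  obtain ⟨v, hv0, hvlt⟩ := hscorner
  have hAfin : {i : Fin r → ℤ | mShift K i d ∣ q}.Finite :=
    finite_shift_dvd hdirr hdfin q hq0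
  have h0A : (0 : Fin r → ℤ) ∈ hAfin.toFinset := by
    rw [Set.Finite.mem_toFinset]
    simpa [mShift_zero] using hddvd
  obtain ⟨imin, himinA, hmin⟩ := Finset.exists_min_image hAfin.toFinset
    (fun i => ∑ l, v l * (i l : ℝ)) ⟨0, h0A⟩
  rw [Set.Finite.mem_toFinset] at himinA
  set g : MvPolynomial (Fin r) K := mShift K (s + imin) d with hg
  have hgirr : Irreducible g := mShift_irreducible_iff.mpr hdirr
  have hgprime : Prime g := UniqueFactorizationMonoid.irreducible_iff_prime.mp hgirr
  have hgdvdsD : g ∣ mShift K s (u * q) := by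
    rw [hg, ← mShift_mShift]
    exact map_dvd _ (himinA.trans (dvd_mul_left q u))
  -- g divides every term with index w ≠ s, and the RHS
  have hgRHS : g ∣ f * ∏ w ∈ S, mShift K w (u * q) :=
    dvd_mul_of_dvd_right (hgdvdsD.trans (Finset.dvd_prod_of_mem (fun w => mShift K w (u * q)) hs)) f
  have hgother : ∀ w ∈ S.erase s,
      g ∣ a w * mShift K w pnum * ∏ w' ∈ S.erase w, mShift K w' (u * q) := by
    intro w hw
    have hsw : s ∈ S.erase w := by
      rw [Finset.mem_erase] at hw ⊢
      exact ⟨fun h => hw.1 h.symm, hs⟩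
    exact dvd_mul_of_dvd_right (hgdvdsD.trans (Finset.dvd_prod_of_mem (fun w => mShift K w (u * q)) hsw)) _
  have hgterm : g ∣ a s * mShift K s pnum * ∏ w' ∈ S.erase s, mShift K w' (u * q) := by
    have hsplit : a s * mShift K s pnum * ∏ w' ∈ S.erase s, mShift K w' (u * q)
        = (f * ∏ w ∈ S, mShift K w (u * q))
          - ∑ w ∈ S.erase s, a w * mShift K w pnum * ∏ w' ∈ S.erase w, mShift K w' (u * q) := by
      rw [← poly_id, ← Finset.add_sum_erase S _ hs]
      ring
    rw [hsplit]
    exact dvd_sub hgRHS (Finset.dvd_sum hgother)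
  -- analyse the divisibility
  rcases hgprime.dvd_mul.mp hgterm with h1 | h1
  swap
  · -- g divides the product over S.erase s : impossible
    exfalso
    obtain ⟨w', hw', hgw'⟩ := hgprime.exists_mem_finset_dvd h1
    rw [Finset.mem_erase] at hw'
    rw [map_mul] at hgw'
    have hshift : g = mShift K w' (mShift K (s + imin - w') d) := by
      rw [mShift_mShift]
      simp [hg]
    rcases hgprime.dvd_mul.mp hgw' with h2 | h2
    · -- g divides a shift of u
      rw [hshift, mShift_dvd_iff] at h2
      have hinf := hu _ (mShift_irreducible_iff.mpr hdirr) h2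
      rw [mSpread_shift] at hinf
      exact hinf hdfin
    · -- g divides a shift of q : contradicts minimality
      rw [hshift, mShift_dvd_iff] at h2
      have hmem : (s + imin - w') ∈ hAfin.toFinset := by
        rw [Set.Finite.mem_toFinset]; exact h2
      have hle := hmin _ hmem
      have hpos := hvlt w' hw'.2 hw'.1
      have hexp : ∑ l, v l * (((s + imin - w') l : ℤ) : ℝ)
          = ∑ l, v l * ((imin l : ℤ) : ℝ) - ∑ l, v l * ((w' l - s l : ℤ) : ℝ) := by
        rw [← Finset.sum_sub_distrib]
        refine Finset.sum_congr rfl fun l _ => ?_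
        simp only [Pi.add_apply, Pi.sub_apply]
        push_cast
        ring
      rw [hexp] at hle
      linarith
  rcases hgprime.dvd_mul.mp h1 with h2 | h2
  · -- g divides a s = us' * as'
    rw [hsfact] at h2
    rcases hgprime.dvd_mul.mp h2 with h3 | h3
    · exfalso
      have hinf := hus' _ hgirr h3
      rw [hg, mSpread_shift] at hinf
      exact hinf hdfin
    · exact ⟨imin, himinA, h3⟩
  · -- g divides mShift s pnum : contradicts coprimality
    exfalso
    have hdp : mShift K imin d ∣ pnum := by
      rw [hg, ← mShift_mShift, mShift_dvd_iff] at h2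
      exact h2
    have hdq : mShift K imin d ∣ u * q := dvd_mul_of_dvd_right himinA u
    exact (mShift_irreducible_iff.mpr hdirr).not_isUnit (hcop hdp hdq)

end Corner


/-- **Corollary.**  Let `s, t ∈ S` be two corner points of `S` and let `a'_s, a'_t` be
the aperiodic parts of the coefficients `a_s, a_t`.  If `Spread(a'_s, a'_t) = ∅`
(i.e. `Disp(a'_s,a'_t) = -∞`), then the aperiodic part of the denominator (in lowest
terms) of any rational solution of the PLDE is `1` (a unit). -/
theorem aperiodic_denominator_trivial_of_empty_spread
    {K : Type*} [Field K] [CharZero K] {r : ℕ}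
    (S : Finset (Fin r → ℤ)) (hS : S.Nonempty)
    (a : (Fin r → ℤ) → MvPolynomial (Fin r) K) (ha : ∀ w ∈ S, a w ≠ 0)
    (f : MvPolynomial (Fin r) K)
    (s t : Fin r → ℤ) (hs : s ∈ S) (ht : t ∈ S)
    (hscorner : ∃ v : Fin r → ℝ, v ≠ 0 ∧
      ∀ w ∈ S, w ≠ s → 0 < ∑ l, v l * ((w l - s l : ℤ) : ℝ))
    (htcorner : ∃ v : Fin r → ℝ, v ≠ 0 ∧
      ∀ w ∈ S, w ≠ t → 0 < ∑ l, v l * ((w l - t l : ℤ) : ℝ))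
    (us' as' ut' at' : MvPolynomial (Fin r) K)
    (hsfact : a s = us' * as')
    (hus' : ∀ d, Irreducible d → d ∣ us' → (mSpread d d).Infinite)
    (has' : ∀ d, Irreducible d → d ∣ as' → (mSpread d d).Finite)
    (htfact : a t = ut' * at')
    (hut' : ∀ d, Irreducible d → d ∣ ut' → (mSpread d d).Infinite)
    (hat' : ∀ d, Irreducible d → d ∣ at' → (mSpread d d).Finite)
    (hspread : mSpread as' at' = ∅) :
    ∀ (y : FractionRing (MvPolynomial (Fin r) K))
      (pnum u q : MvPolynomial (Fin r) K),
      (∑ w ∈ S, toFrac K (a w) * fShift K w y = toFrac K f) →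
      u * q ≠ 0 →
      y = toFrac K pnum / toFrac K (u * q) →
      IsRelPrime pnum (u * q) →
      (∀ d, Irreducible d → d ∣ u → (mSpread d d).Infinite) →
      (∀ d, Irreducible d → d ∣ q → (mSpread d d).Finite) →
      IsUnit q := by
  intro y pnum u q heq huq hy hcop hu hq
  by_contra hqunit
  have hq0 : q ≠ 0 := right_ne_zero_of_mul huq
  obtain ⟨d, hdirr, hddvd⟩ := WfDvdMonoid.exists_irreducible_factor hqunit hq0
  have hdfin : (mSpread d d).Finite := hq d hdirr hddvd
  have hinjF : Function.Injective (toFrac K (r := r)) := IsFractionRing.injective _ _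
  have hfrac : ∀ (i : Fin r → ℤ) (z : MvPolynomial (Fin r) K),
      fShift K i (toFrac K z) = toFrac K (mShift K i z) := fun i z =>
    IsFractionRing.ringEquivOfRingEquiv_algebraMap _ z
  have hDne : ∀ w : Fin r → ℤ, toFrac K (mShift K w (u * q)) ≠ 0 := by
    intro w hzero
    apply huq
    have h0 : mShift K w (u * q) = 0 := hinjF (by rw [hzero, map_zero])
    have h1 := congrArg (mShift K (-w)) h0
    simpa [mShift_mShift, mShift_zero] using h1
  have keyF : toFrac K (∑ w ∈ S, a w * mShift K w pnum * ∏ w' ∈ S.erase w, mShift K w' (u * q))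
      = toFrac K (f * ∏ w ∈ S, mShift K w (u * q)) := by
    rw [map_sum, map_mul, map_prod, ← heq, Finset.sum_mul]
    refine Finset.sum_congr rfl fun w hw => ?_
    rw [map_mul, map_mul, map_prod, hy, map_div₀, hfrac, hfrac,
      ← Finset.mul_prod_erase S (fun x => toFrac K (mShift K x (u * q))) hw]
    have hne' : toFrac K (mShift K w u) * toFrac K (mShift K w q) ≠ 0 := by
      rw [← map_mul, ← map_mul]; exact hDne w
    obtain ⟨hneu, hneq⟩ := mul_ne_zero_iff.mp hne'
    field_simp
  have poly_id := hinjF keyF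
  obtain ⟨is, hisA, hisdvd⟩ := corner_extract S a f pnum u q s hs hscorner us' as' hsfact hus'
    d hdirr hdfin hddvd hq0 hcop hu poly_id
  obtain ⟨it, hitA, hitdvd⟩ := corner_extract S a f pnum u q t ht htcorner ut' at' htfact hut'
    d hdirr hdfin hddvd hq0 hcop hu poly_id
  have hj : (s + is) - (t + it) ∈ mSpread as' at' := by
    intro hrel
    have hdvd2 : mShift K (s + is) d ∣ mShift K ((s + is) - (t + it)) at' := by
      have h3 := map_dvd (mShift K ((s + is) - (t + it))) hitdvd
      rwa [mShift_mShift, show (s + is) - (t + it) + (t + it) = s + is by simp] at h3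
    exact (mShift_irreducible_iff.mpr hdirr).not_isUnit (hrel hisdvd hdvd2)
  rw [hspread] at hj
  exact hj
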